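/- Let R be a (not necessarily commutative) ring containing elements b and b† satisfying b·b† − b†·b = 1, and define L(m,n) := (b†)^m·b^n for natural numbers m, n. Then for all natural numbers m, n, k, l, the commutator satisfies L(m,n)·L(k,l) − L(k,l)·L(m,n) = ∑_{s=1}^{min(n,k)} (s!·C(n,s)·C(k,s)) • L(m+k−s, n+l−s) − ∑_{s=1}^{min(l,m)} (s!·C(l,s)·C(m,s)) • L(k+m−s, l+n−s), i.e., the operators L(m,n) realize the W∞ algebra. -/
import Mathlib

open Finset

private lemma winfty_comm1' {R : Type*} [Ring R] (b bd : R)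
    (h : b * bd - bd * b = 1) :
    ∀ j : ℕ, b * bd ^ (j + 1) = bd ^ (j + 1) * b + (j + 1) • bd ^ j := by
  have hb : b * bd = bd * b + 1 := by
    rw [← h]; abel
  intro j
  induction j with
  | zero => simpa using hb
  | succ j ih =>
    calc b * bd ^ (j + 2) = (b * bd ^ (j + 1)) * bd := by
          rw [pow_succ, mul_assoc]
      _ = (bd ^ (j + 1) * b + (j + 1) • bd ^ j) * bd := by rw [ih]
      _ = bd ^ (j + 1) * (b * bd) + (j + 1) • (bd ^ j * bd) := by
          rw [add_mul, mul_assoc, smul_mul_assoc]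
      _ = bd ^ (j + 1) * (bd * b) + bd ^ (j + 1) + (j + 1) • bd ^ (j + 1) := by
          rw [hb, mul_add, mul_one, pow_succ]
      _ = bd ^ (j + 2) * b + (j + 2) • bd ^ (j + 1) := by
          rw [← mul_assoc, ← pow_succ]
          module

private lemma winfty_comm1 {R : Type*} [Ring R] (b bd : R)
    (h : b * bd - bd * b = 1) (j : ℕ) :
    b * bd ^ j = bd ^ j * b + j • bd ^ (j - 1) := by
  cases j with
  | zero => simp
  | succ j => simpa using winfty_comm1' b bd h j

private lemma winfty_crec (n k t : ℕ) :
    (t + 1).factorial * (n + 1).choose (t + 1) * k.choose (t + 1) =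
      (t + 1).factorial * n.choose (t + 1) * k.choose (t + 1) +
        (t.factorial * n.choose t * k.choose t) * (k - t) := by
  rcases le_or_gt t k with htk | htk
  · have h1 := Nat.choose_succ_right_eq k t
    rw [Nat.choose_succ_succ, Nat.factorial_succ]
    zify [htk] at h1 ⊢
    linear_combination (t.factorial * n.choose t : ℤ) * h1
  · have h2 : k < t + 1 := htk.trans (Nat.lt_succ_self t)
    simp [Nat.choose_eq_zero_of_lt h2, Nat.sub_eq_zero_of_le htk.le]

private lemma winfty_key {R : Type*} [Ring R] (b bd : R)
    (h : b * bd - bd * b = 1) (k : ℕ) :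
    ∀ n : ℕ, b ^ n * bd ^ k =
      ∑ s ∈ range (k + 1),
        (s.factorial * n.choose s * k.choose s) • (bd ^ (k - s) * b ^ (n - s)) := by
  intro n
  induction n with
  | zero =>
    rw [Finset.sum_range_succ']
    simp [Nat.choose_eq_zero_of_lt]
  | succ n ih =>
    have step1 : b ^ (n + 1) * bd ^ k = b * (b ^ n * bd ^ k) := by
      rw [pow_succ', mul_assoc]
    rw [step1, ih, Finset.mul_sum]
    have term : ∀ s ∈ range (k + 1),
        b * ((s.factorial * n.choose s * k.choose s) • (bd ^ (k - s) * b ^ (n - s))) =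
          (s.factorial * n.choose s * k.choose s) • (bd ^ (k - s) * b ^ ((n - s) + 1)) +
            ((s.factorial * n.choose s * k.choose s) * (k - s)) •
              (bd ^ (k - s - 1) * b ^ (n - s)) := by
      intro s _
      rw [mul_smul_comm, ← mul_assoc, winfty_comm1 b bd h (k - s), add_mul,
        smul_mul_assoc, mul_assoc (bd ^ (k - s)) b (b ^ (n - s)), ← pow_succ' b (n - s),
        smul_add, smul_smul]
    rw [Finset.sum_congr rfl term, Finset.sum_add_distrib]
    -- first sum : fix exponent of b
    have e1 : ∑ s ∈ range (k + 1),
        (s.factorial * n.choose s * k.choose s) • (bd ^ (k - s) * b ^ ((n - s) + 1)) =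
        ∑ s ∈ range (k + 1),
        (s.factorial * n.choose s * k.choose s) • (bd ^ (k - s) * b ^ ((n + 1) - s)) := by
      refine Finset.sum_congr rfl fun s _ => ?_
      rcases le_or_gt s n with hs | hs
      · have : (n - s) + 1 = (n + 1) - s := by omega
        rw [this]
      · simp [Nat.choose_eq_zero_of_lt hs]
    -- second sum : reindex
    have e2 : ∑ s ∈ range (k + 1),
        ((s.factorial * n.choose s * k.choose s) * (k - s)) •
          (bd ^ (k - s - 1) * b ^ (n - s)) =
        ∑ t ∈ range k,
        ((t.factorial * n.choose t * k.choose t) * (k - t)) •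
          (bd ^ (k - (t + 1)) * b ^ ((n + 1) - (t + 1))) := by
      rw [Finset.sum_range_succ]
      simp only [Nat.sub_self, mul_zero, zero_smul, add_zero]
      refine Finset.sum_congr rfl fun t _ => ?_
      rw [Nat.sub_sub, Nat.succ_sub_succ]
    rw [e1, e2]
    -- target side
    rw [Finset.sum_range_succ', Finset.sum_range_succ' (fun s =>
      (s.factorial * (n + 1).choose s * k.choose s) • (bd ^ (k - s) * b ^ ((n + 1) - s)))]
    simp only [winfty_crec n k, add_smul, Finset.sum_add_distrib]
    simp only [Nat.choose_zero_right, Nat.factorial_zero]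
    abel

private lemma winfty_Lmul {R : Type*} [Ring R] (b bd : R)
    (h : b * bd - bd * b = 1) (m n k l : ℕ) :
    bd ^ m * b ^ n * (bd ^ k * b ^ l) =
      ∑ s ∈ range (k + 1),
        (s.factorial * n.choose s * k.choose s) • (bd ^ (m + k - s) * b ^ (n + l - s)) := by
  rw [mul_assoc, ← mul_assoc (b ^ n) (bd ^ k) (b ^ l), winfty_key b bd h k n,
    Finset.sum_mul, Finset.mul_sum]
  refine Finset.sum_congr rfl fun s hs => ?_
  have hsk : s ≤ k := by simpa [Nat.lt_succ_iff] using hs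
  rw [smul_mul_assoc, mul_smul_comm]
  rcases le_or_gt s n with hsn | hsn
  · have h1 : m + (k - s) = m + k - s := by omega
    have h2 : (n - s) + l = n + l - s := by omega
    rw [show bd ^ (k - s) * b ^ (n - s) * b ^ l = bd ^ (k - s) * b ^ (n + l - s) by
        rw [mul_assoc, ← pow_add, h2],
      ← mul_assoc, ← pow_add, h1]
  · simp [Nat.choose_eq_zero_of_lt hsn]

/-- The operators `L(m,n) = (b†)^m b^n` built from a canonical pair
`b·b† − b†·b = 1` realize the `W∞` algebra. -/
theorem winfty_algebra {R : Type*} [Ring R] (b bd : R)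
    (h : b * bd - bd * b = 1)
    (L : ℕ → ℕ → R) (hL : ∀ m n : ℕ, L m n = bd ^ m * b ^ n)
    (m n k l : ℕ) :
    L m n * L k l - L k l * L m n =
      (∑ s ∈ Finset.Icc 1 (min n k),
        (s.factorial * n.choose s * k.choose s) • L (m + k - s) (n + l - s)) -
      ∑ s ∈ Finset.Icc 1 (min l m),
        (s.factorial * l.choose s * m.choose s) • L (k + m - s) (l + n - s) := by
  have e1 : L m n * L k l =
      ∑ s ∈ range (k + 1),
        (s.factorial * n.choose s * k.choose s) • L (m + k - s) (n + l - s) := by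
    simp only [hL]
    exact winfty_Lmul b bd h m n k l
  have e2 : L k l * L m n =
      ∑ s ∈ range (m + 1),
        (s.factorial * l.choose s * m.choose s) • L (k + m - s) (l + n - s) := by
    simp only [hL]
    exact winfty_Lmul b bd h k l m n
  have icc : ∀ (a c p q : ℕ) (f : ℕ → ℕ → R),
      ∑ s ∈ range (a + 1), (s.factorial * c.choose s * a.choose s) • f (p + a - s) (c + q - s) =
        (∑ s ∈ Finset.Icc 1 (min c a),
            (s.factorial * c.choose s * a.choose s) • f (p + a - s) (c + q - s)) +
          f (p + a) (c + q) := by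
    intro a c p q f
    rw [Finset.sum_range_succ']
    congr 1
    · have hsub : Finset.Icc 1 (min c a) ⊆ Finset.Icc 1 a :=
        Finset.Icc_subset_Icc_right (min_le_right c a)
      have hzero : ∀ x ∈ Finset.Icc 1 a, x ∉ Finset.Icc 1 (min c a) →
          (x.factorial * c.choose x * a.choose x) • f (p + a - x) (c + q - x) = 0 := by
        intro x hx hnx
        have h1 : 1 ≤ x ∧ x ≤ a := by simpa using hx
        have h2 : c < x := by
          rcases h1 with ⟨ha, hb'⟩
          by_contra hc
          exact hnx (by simp [Finset.mem_Icc, ha, le_min (le_of_not_gt hc) hb'])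
        simp [Nat.choose_eq_zero_of_lt h2]
      rw [Finset.sum_subset hsub hzero, ← Finset.Ico_add_one_right_eq_Icc, Finset.sum_Ico_eq_sum_range]
      have hr : a + 1 - 1 = a := by omega
      rw [hr]
      exact Finset.sum_congr rfl fun i _ => by rw [add_comm 1 i]
    · simp
  rw [e1, e2, icc k n m l L, icc m l k n L]
  have h1 : k + m = m + k := by omega
  have h2 : l + n = n + l := by omega
  rw [h1, h2]
  abel
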